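/- For m ≥ 1 and n = 63m + 6, the maximum d permitted by the Griesmer bound for binary [n, 6, d] codes is d = 32m + 1; consequently, since the m-fold repetition of the simplex code gives a self-orthogonal [63m, 6, 32m] code and d_{so} is even and monotone in n, d_{so}(63m + r, 6) = 32m = 2⌊d(63m + r, 6)/2⌋ for all 0 ≤ r ≤ 6. -/
import Mathlib


/-- A binary linear code is self-orthogonal if all pairs of codewords have zero
inner product over `F_2`. -/
def IsSO {n : ℕ} (C : Submodule (ZMod 2) (Fin n → ZMod 2)) : Prop :=
  ∀ x ∈ C, ∀ y ∈ C, ∑ i, x i * y i = 0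

/-- `C` has minimum distance exactly `d`. -/
def IsMinDist {n : ℕ} (C : Submodule (ZMod 2) (Fin n → ZMod 2)) (d : ℕ) : Prop :=
  (∃ x ∈ C, x ≠ 0 ∧ hammingNorm x = d) ∧ ∀ x ∈ C, x ≠ 0 → d ≤ hammingNorm x

/-- `d(n,k)`: the largest minimum distance among binary `[n,k]` linear codes. -/
noncomputable def dLin (n k : ℕ) : ℕ :=
  sSup {d | ∃ C : Submodule (ZMod 2) (Fin n → ZMod 2),
    Module.finrank (ZMod 2) C = k ∧ IsMinDist C d}

/-- `d_so(n,k)`: the largest minimum distance among binary self-orthogonal `[n,k]` codes. -/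
noncomputable def dSO (n k : ℕ) : ℕ :=
  sSup {d | ∃ C : Submodule (ZMod 2) (Fin n → ZMod 2),
    IsSO C ∧ Module.finrank (ZMod 2) C = k ∧ IsMinDist C d}



open Finset

section Aux

lemma zmod2_ne_zero_eq_one' : ∀ a : ZMod 2, a ≠ 0 → a = 1 := by decide
lemma zmod2_eq_of_add_eq_zero : ∀ a b : ZMod 2, a + b = 0 → a = b := by decide
lemma zmod2_wt_identity : ∀ a b : ZMod 2,
    ((if a ≠ 0 then 1 else 0) + (if a + b ≠ 0 then 1 else 0) : ℕ)
      = (if b ≠ 0 then 1 else 0) + 2 * (if b = 0 then (if a ≠ 0 then 1 else 0) else 0) := by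
  decide

def GoodCode (ι : Type) [Fintype ι] (k d : ℕ) : Prop :=
  ∃ C : Submodule (ZMod 2) (ι → ZMod 2), Module.finrank (ZMod 2) C = k ∧
    ∀ x ∈ C, x ≠ 0 → d ≤ hammingNorm x

lemma residCode {ι : Type} [Fintype ι] {k d : ℕ} (hd : 1 ≤ d) (h : GoodCode ι (k+1) d) :
    ∃ (w : ℕ) (p : ι → Prop) (_ : DecidablePred p), d ≤ w ∧
      Fintype.card {i // p i} + w = Fintype.card ι ∧
      GoodCode {i // p i} k ((w-1)/2 + 1) := by
  classical
  obtain ⟨C, hrank, hmin⟩ := h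
  have hCbot : C ≠ ⊥ := by
    intro hb; rw [hb, finrank_bot] at hrank; omega
  set T : Set ℕ := {t | ∃ x ∈ C, x ≠ 0 ∧ hammingNorm x = t} with hT
  have hTne : T.Nonempty := by
    obtain ⟨x, hx, hx0⟩ := (Submodule.ne_bot_iff C).1 hCbot
    exact ⟨_, x, hx, hx0, rfl⟩
  obtain ⟨c, hcC, hc0, hcw⟩ := Nat.sInf_mem hTne
  have hwle : ∀ x ∈ C, x ≠ 0 → sInf T ≤ hammingNorm x := fun x hx h0 =>
    Nat.sInf_le ⟨x, hx, h0, rfl⟩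
  have hdw : d ≤ sInf T := hcw ▸ hmin c hcC hc0
  refine ⟨sInf T, fun i => c i = 0, inferInstance, hdw, ?_, ?_⟩
  · rw [Fintype.card_subtype, ← hcw]
    have h1 := Finset.card_filter_add_card_filter_not
      (s := (univ : Finset ι)) (fun i => c i = 0)
    have h2 : hammingNorm c = #(univ.filter fun i => ¬ c i = 0) := by
      simp [hammingNorm, Finset.filter_congr_decidable]
    rw [h2]
    simpa using h1
  · -- residual code
    set res : (ι → ZMod 2) →ₗ[ZMod 2] ({i // c i = 0} → ZMod 2) :=
      LinearMap.funLeft (ZMod 2) (ZMod 2) Subtype.val with hres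
    set f : C →ₗ[ZMod 2] ({i // c i = 0} → ZMod 2) := res.comp C.subtype with hf
    have hfc : f ⟨c, hcC⟩ = 0 := by
      funext j; exact j.2
    have hker : LinearMap.ker f = Submodule.span (ZMod 2) {(⟨c, hcC⟩ : C)} := by
      apply le_antisymm
      · intro x hx
        have hx' : ∀ i (hi : c i = 0), (x : ι → ZMod 2) i = 0 := fun i hi =>
          congrFun (LinearMap.mem_ker.1 hx) ⟨i, hi⟩
        by_cases hx0 : (x : ι → ZMod 2) = 0
        · have : x = 0 := Subtype.ext hx0
          simp [this]
        · have hsub : (univ.filter fun i => (x : ι → ZMod 2) i ≠ 0)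
              ⊆ univ.filter fun i => c i ≠ 0 := by
            intro i hi
            simp only [mem_filter, mem_univ, true_and] at hi ⊢
            intro hci
            exact hi (hx' i hci)
          have hle : hammingNorm (x : ι → ZMod 2) ≤ hammingNorm c := Finset.card_le_card hsub
          have hge : sInf T ≤ hammingNorm (x : ι → ZMod 2) := hwle _ x.2 hx0
          have heqw : hammingNorm (x : ι → ZMod 2) = hammingNorm c :=
            le_antisymm hle (by omega)
          have hseteq := Finset.eq_of_subset_of_card_le hsub (le_of_eq heqw.symm)
          have hxc : (x : ι → ZMod 2) = c := by
            funext i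
            by_cases hci : c i = 0
            · rw [hx' i hci, hci]
            · have hxi : (x : ι → ZMod 2) i ≠ 0 := by
                have hmem : i ∈ univ.filter fun i => c i ≠ 0 := by simp [hci]
                rw [← hseteq] at hmem; simpa using hmem
              have : ∀ a b : ZMod 2, a ≠ 0 → b ≠ 0 → a = b := by decide
              exact this _ _ hxi hci
          have : x = (⟨c, hcC⟩ : C) := Subtype.ext hxc
          rw [this]
          exact Submodule.mem_span_singleton_self _
      · rw [Submodule.span_le, Set.singleton_subset_iff]
        exact LinearMap.mem_ker.2 hfc
    have hcne : (⟨c, hcC⟩ : C) ≠ 0 := by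
      intro h; exact hc0 (congrArg Subtype.val h)
    have hrk := LinearMap.finrank_range_add_finrank_ker f
    rw [hker, finrank_span_singleton hcne, hrank] at hrk
    refine ⟨LinearMap.range f, Nat.add_right_cancel hrk, ?_⟩
    rintro y hy hy0
    obtain ⟨⟨x, hxC⟩, rfl⟩ := hy
    have hx0 : x ≠ 0 := by
      rintro rfl
      exact hy0 (map_zero f)
    have hxc : x ≠ c := by
      rintro rfl
      exact hy0 hfc
    have hxcC : x + c ∈ C := C.add_mem hxC hcC
    have hxc0 : x + c ≠ 0 := by
      intro hxx
      exact hxc (funext fun i => zmod2_eq_of_add_eq_zero _ _ (congrFun hxx i))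
    have hy' : hammingNorm (f ⟨x, hxC⟩)
        = ∑ i ∈ univ.filter (fun i => c i = 0), (if x i ≠ 0 then 1 else 0) := by
      rw [hammingNorm, Finset.card_filter]
      exact (Finset.sum_subtype (p := fun i => c i = 0) (univ.filter fun i => c i = 0) (fun x => by simp) (fun i => if x i ≠ 0 then 1 else 0)).symm
    have key : hammingNorm x + hammingNorm (x + c)
        = hammingNorm c + 2 * hammingNorm (f ⟨x, hxC⟩) := by
      rw [hammingNorm, hammingNorm, hammingNorm, Finset.card_filter, Finset.card_filter,
        Finset.card_filter, hy', Finset.sum_filter, ← Finset.sum_add_distrib,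
        Finset.mul_sum, ← Finset.sum_add_distrib]
      apply Finset.sum_congr rfl
      intro i _
      simpa using zmod2_wt_identity (x i) (c i)
    have h1 : sInf T ≤ hammingNorm x := hwle x hxC hx0
    have h2 : sInf T ≤ hammingNorm (x + c) := hwle _ hxcC hxc0
    omega


lemma griesmer : ∀ (k : ℕ) (ι : Type) [Fintype ι] (d : ℕ), 1 ≤ d → GoodCode ι k d →
    ∑ i ∈ Finset.range k, ((d-1)/2^i + 1) ≤ Fintype.card ι := by
  intro k
  induction k with
  | zero => intro ι _ d _ _; simp
  | succ k ih =>
    intro ι _ d hd hg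
    obtain ⟨w, p, _, hdw, hcard, hres⟩ := residCode hd hg
    have hw1 : 1 ≤ w := le_trans hd hdw
    have h2 := ih {i // p i} ((w-1)/2 + 1) (by omega) hres
    have mono : ∑ i ∈ range (k+1), ((d-1)/2^i + 1) ≤ ∑ i ∈ range (k+1), ((w-1)/2^i + 1) :=
      Finset.sum_le_sum fun i _ => by
        have := Nat.div_le_div_right (c := 2^i) (Nat.sub_le_sub_right hdw 1); omega
    have hdiv : ∀ i : ℕ, (w-1)/2^(i+1) = ((w-1)/2)/2^i := by
      intro i; rw [Nat.div_div_eq_div_mul, ← pow_succ']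
    have shift : ∑ i ∈ range (k+1), ((w-1)/2^i + 1)
        = w + ∑ i ∈ range k, (((w-1)/2 + 1 - 1)/2^i + 1) := by
      rw [Finset.sum_range_succ']
      simp only [pow_zero, Nat.div_one, hdiv, Nat.add_sub_cancel]
      omega
    omega



lemma zmod2_ne_zero_eq_one : ∀ a : ZMod 2, a ≠ 0 → a = 1 := by decide
lemma zmod2_add_self : ∀ a : ZMod 2, a + a = 0 := by decide
lemma zmod2_adds : ∀ a b : ZMod 2, a + b + b = a := by decide

abbrev Wt := {w : Fin 6 → ZMod 2 // w ≠ 0}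

lemma hammingNorm_eq_sum {ι : Type*} [Fintype ι] (x : ι → ZMod 2) :
    hammingNorm x = ∑ i, if x i ≠ 0 then 1 else 0 := Finset.card_filter _ _

def dot6 (u w : Fin 6 → ZMod 2) : ZMod 2 := ∑ i, u i * w i

lemma dot6_add_right (u a b : Fin 6 → ZMod 2) : dot6 u (a + b) = dot6 u a + dot6 u b := by
  simp [dot6, mul_add, Finset.sum_add_distrib]

lemma dot6_zero_right (u : Fin 6 → ZMod 2) : dot6 u 0 = 0 := by simp [dot6]

def Ldot (u : Fin 6 → ZMod 2) : (Fin 6 → ZMod 2) →ₗ[ZMod 2] ZMod 2 where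
  toFun w := dot6 u w
  map_add' a b := dot6_add_right u a b
  map_smul' r a := by simp [dot6, Finset.mul_sum, smul_eq_mul, mul_left_comm]

lemma exists_single {v : Fin 6 → ZMod 2} (hv : v ≠ 0) :
    ∃ w₁ : Fin 6 → ZMod 2, w₁ ≠ 0 ∧ dot6 v w₁ = 1 := by
  obtain ⟨i, hi⟩ : ∃ i, v i ≠ 0 := by
    by_contra h; push_neg at h; exact hv (funext fun i => h i)
  refine ⟨fun i' => if i' = i then 1 else 0, ?_, ?_⟩
  · intro h
    have := congrFun h i
    simp at this
  · rw [dot6, Finset.sum_eq_single i]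
    · simpa using zmod2_ne_zero_eq_one _ hi
    · intro b _ hb; simp [hb]
    · simp

lemma exists_w0 (u v : Fin 6 → ZMod 2) :
    ∃ w₀ : Fin 6 → ZMod 2, w₀ ≠ 0 ∧ dot6 u w₀ = 0 ∧ dot6 v w₀ = 0 := by
  have hdim : Module.finrank (ZMod 2) (Fin 6 → ZMod 2) = 6 := by
    rw [Module.finrank_fintype_fun_eq_card, Fintype.card_fin]
  have hker : ∀ z : Fin 6 → ZMod 2, 5 ≤ Module.finrank (ZMod 2) (LinearMap.ker (Ldot z)) := by
    intro z
    have h1 := LinearMap.finrank_range_add_finrank_ker (Ldot z)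
    rw [hdim] at h1
    have h2 : Module.finrank (ZMod 2) (LinearMap.range (Ldot z)) ≤ 1 := by
      have := Submodule.finrank_le (LinearMap.range (Ldot z))
      rwa [Module.finrank_self] at this
    omega
  have hsup : Module.finrank (ZMod 2) ((LinearMap.ker (Ldot u)) ⊔ (LinearMap.ker (Ldot v)) : Submodule (ZMod 2) (Fin 6 → ZMod 2)) ≤ 6 := by
    have := Submodule.finrank_le ((LinearMap.ker (Ldot u)) ⊔ (LinearMap.ker (Ldot v)) : Submodule (ZMod 2) (Fin 6 → ZMod 2))
    rwa [hdim] at this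
  have hinf := Submodule.finrank_sup_add_finrank_inf_eq (LinearMap.ker (Ldot u)) (LinearMap.ker (Ldot v))
  have hpos : 0 < Module.finrank (ZMod 2) ((LinearMap.ker (Ldot u)) ⊓ (LinearMap.ker (Ldot v)) : Submodule (ZMod 2) (Fin 6 → ZMod 2)) := by
    have := hker u; have := hker v; omega
  have hne : ((LinearMap.ker (Ldot u)) ⊓ (LinearMap.ker (Ldot v)) : Submodule (ZMod 2) (Fin 6 → ZMod 2)) ≠ ⊥ := by
    intro h; rw [h, finrank_bot] at hpos; omega
  obtain ⟨w₀, hw₀, h0⟩ := (Submodule.ne_bot_iff _).1 hne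
  exact ⟨w₀, h0, (Submodule.mem_inf.1 hw₀).1, (Submodule.mem_inf.1 hw₀).2⟩

lemma dot_sum_zero (u v : Fin 6 → ZMod 2) :
    ∑ w : Fin 6 → ZMod 2, dot6 u w * dot6 v w = 0 := by
  obtain ⟨w₀, hw0, hu0, hv0⟩ := exists_w0 u v
  have hadd : ∀ w : Fin 6 → ZMod 2, w + w₀ + w₀ = w := fun w =>
    funext fun i => zmod2_adds _ _
  apply Finset.sum_ninvolution (g := fun w => w + w₀)
  · intro w
    rw [dot6_add_right, dot6_add_right, hu0, hv0, add_zero, add_zero]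
    exact zmod2_add_self _
  · intro w _
    intro heq
    apply hw0
    have h2 : w + w₀ = w + 0 := by rw [heq, add_zero]
    exact add_left_cancel h2
  · intro w; exact Finset.mem_univ _
  · exact hadd

lemma card32 {v : Fin 6 → ZMod 2} (hv : v ≠ 0) :
    #(univ.filter fun w : Fin 6 → ZMod 2 => dot6 v w = 1) = 32 := by
  obtain ⟨w₁, hw₁, hdot⟩ := exists_single hv
  have hadds : ∀ w : Fin 6 → ZMod 2, w + w₁ + w₁ = w := fun w =>
    funext fun i => zmod2_adds _ _
  have hbij : #(univ.filter fun w : Fin 6 → ZMod 2 => dot6 v w = 0)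
      = #(univ.filter fun w : Fin 6 → ZMod 2 => dot6 v w = 1) := by
    apply Finset.card_bij' (fun w _ => w + w₁) (fun w _ => w + w₁)
    · intro a ha
      simp only [mem_filter, mem_univ, true_and] at ha ⊢
      rw [dot6_add_right, ha, hdot, zero_add]
    · intro a ha
      simp only [mem_filter, mem_univ, true_and] at ha ⊢
      rw [dot6_add_right, ha, hdot]
      decide
    · intro a _; exact hadds a
    · intro a _; exact hadds a
  have hneg : (univ.filter fun w : Fin 6 → ZMod 2 => ¬ dot6 v w = 1)
      = univ.filter fun w : Fin 6 → ZMod 2 => dot6 v w = 0 := by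
    apply Finset.filter_congr
    intro w _
    have : ∀ a : ZMod 2, (¬ a = 1) ↔ a = 0 := by decide
    simp [this]
  have hsplit := Finset.card_filter_add_card_filter_not
    (s := (univ : Finset (Fin 6 → ZMod 2))) (fun w => dot6 v w = 1)
  rw [hneg] at hsplit
  have hcard : #(univ : Finset (Fin 6 → ZMod 2)) = 64 := by
    rw [Finset.card_univ]
    simp [Fintype.card_fun]
  omega

def φ0 (m : ℕ) : (Fin 6 → ZMod 2) →ₗ[ZMod 2] (Fin m × Wt → ZMod 2) where
  toFun v := fun p => dot6 v p.2.1
  map_add' a b := by funext p; simp [dot6, add_mul, Finset.sum_add_distrib]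
  map_smul' r a := by funext p; simp [dot6, Finset.mul_sum, smul_eq_mul, mul_assoc]

lemma sum_Wt_eq (g : (Fin 6 → ZMod 2) → ℕ) (hg : g 0 = 0) :
    ∑ w : Wt, g w.1 = ∑ w : Fin 6 → ZMod 2, g w := by
  rw [← Finset.sum_subtype (p := fun w : Fin 6 → ZMod 2 => w ≠ 0)
    (univ.filter fun w => w ≠ 0) (fun x => by simp) g]
  rw [Finset.sum_filter]
  apply Finset.sum_congr rfl
  intro w _
  by_cases h : w = 0
  · simp [h, hg]
  · simp [h]

lemma sum_Wt_eq' (g : (Fin 6 → ZMod 2) → ZMod 2) (hg : g 0 = 0) :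
    ∑ w : Wt, g w.1 = ∑ w : Fin 6 → ZMod 2, g w := by
  rw [← Finset.sum_subtype (p := fun w : Fin 6 → ZMod 2 => w ≠ 0)
    (univ.filter fun w => w ≠ 0) (fun x => by simp) g]
  rw [Finset.sum_filter]
  apply Finset.sum_congr rfl
  intro w _
  by_cases h : w = 0
  · simp [h, hg]
  · simp [h]

lemma φ0_norm {m : ℕ} {v : Fin 6 → ZMod 2} (hv : v ≠ 0) :
    hammingNorm (φ0 m v) = 32 * m := by
  have h1 : hammingNorm (φ0 m v) = ∑ p : Fin m × Wt, (if dot6 v p.2.1 ≠ 0 then 1 else 0) :=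
    Finset.card_filter _ _
  rw [h1, Fintype.sum_prod_type]
  have h2 : ∑ w : Wt, (if dot6 v w.1 ≠ 0 then 1 else 0)
      = ∑ w : Fin 6 → ZMod 2, (if dot6 v w ≠ 0 then (1:ℕ) else 0) := by
    exact sum_Wt_eq (fun w => if dot6 v w ≠ 0 then 1 else 0) (by simp [dot6_zero_right])
  have h3 : ∑ w : Fin 6 → ZMod 2, (if dot6 v w ≠ 0 then (1:ℕ) else 0)
      = ∑ w : Fin 6 → ZMod 2, (if dot6 v w = 1 then (1:ℕ) else 0) := by
    apply Finset.sum_congr rfl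
    intro w _
    have : ∀ a : ZMod 2, (a ≠ 0) ↔ a = 1 := by decide
    simp [this]
  have h4 : (∑ w : Wt, if dot6 v w.1 ≠ 0 then (1:ℕ) else 0) = 32 := by
    rw [h2, h3, ← Finset.card_filter, card32 hv]
  rw [Finset.sum_congr rfl (fun x _ => h4), Finset.sum_const, Finset.card_univ,
    Fintype.card_fin, smul_eq_mul]
  ring

lemma φ0_so {m : ℕ} (u v : Fin 6 → ZMod 2) :
    ∑ p : Fin m × Wt, φ0 m u p * φ0 m v p = 0 := by
  rw [Fintype.sum_prod_type]
  have hS : ∑ w : Wt, dot6 u w.1 * dot6 v w.1 = 0 := by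
    rw [sum_Wt_eq' (fun w => dot6 u w * dot6 v w) (by simp [dot6_zero_right])]
    exact dot_sum_zero u v
  simp only [φ0]
  simp [hS]

lemma φ0_ker {m : ℕ} (hm : 1 ≤ m) : LinearMap.ker (φ0 m) = ⊥ := by
  rw [LinearMap.ker_eq_bot']
  intro v hv
  by_contra h0
  obtain ⟨w₁, hw₁, hdot⟩ := exists_single h0
  have := congrFun hv (⟨0, hm⟩, ⟨w₁, hw₁⟩)
  rw [show φ0 m v (⟨0, hm⟩, ⟨w₁, hw₁⟩) = dot6 v w₁ from rfl, hdot] at this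
  simp at this

/-- properties of a good generator map -/
def CodeProps (n t : ℕ) (ψ : (Fin 6 → ZMod 2) →ₗ[ZMod 2] (Fin n → ZMod 2)) : Prop :=
  (∀ v, v ≠ 0 → hammingNorm (ψ v) = t) ∧
  (∀ u v, ∑ j, ψ u j * ψ v j = 0) ∧
  LinearMap.ker ψ = ⊥

lemma hammingNorm_comp_equiv {α β : Type*} [Fintype α] [Fintype β] (e : α ≃ β)
    (x : β → ZMod 2) : hammingNorm (x ∘ e) = hammingNorm x := by
  rw [hammingNorm_eq_sum, hammingNorm_eq_sum]
  exact Equiv.sum_comp e (fun b => if x b ≠ 0 then 1 else 0)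

lemma base_props (m : ℕ) (hm : 1 ≤ m) :
    ∃ ψ : (Fin 6 → ZMod 2) →ₗ[ZMod 2] (Fin (63 * m) → ZMod 2),
      CodeProps (63 * m) (32 * m) ψ := by
  have hcard : Fintype.card (Fin m × Wt) = 63 * m := by
    rw [Fintype.card_prod, Fintype.card_fin]
    have : Fintype.card Wt = 63 := by
      have h64 : Fintype.card (Fin 6 → ZMod 2) = 64 := by simp [Fintype.card_fun]
      have := Fintype.card_subtype_compl (fun w : Fin 6 → ZMod 2 => w = 0)
      simp only [Fintype.card_subtype_eq] at this
      have heq : Fintype.card Wt = Fintype.card { x : Fin 6 → ZMod 2 // ¬ x = 0 } :=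
        Fintype.card_congr (Equiv.subtypeEquivRight (fun w => by simp))
      rw [heq, this, h64]
    rw [this]; ring
  set e : Fin (63 * m) ≃ (Fin m × Wt) := (Fintype.equivFinOfCardEq hcard).symm with he
  set rel : (Fin m × Wt → ZMod 2) →ₗ[ZMod 2] (Fin (63 * m) → ZMod 2) :=
    LinearMap.funLeft (ZMod 2) (ZMod 2) e with hrel
  refine ⟨rel.comp (φ0 m), ?_, ?_, ?_⟩
  · intro v hv
    have : rel (φ0 m v) = (φ0 m v) ∘ e := rfl
    rw [LinearMap.comp_apply, this, hammingNorm_comp_equiv e (φ0 m v), φ0_norm hv]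
  · intro u v
    rw [LinearMap.comp_apply, LinearMap.comp_apply]
    have : ∑ j, (φ0 m u ∘ e) j * (φ0 m v ∘ e) j = ∑ p, φ0 m u p * φ0 m v p :=
      Equiv.sum_comp e (fun p => φ0 m u p * φ0 m v p)
    exact this.trans (φ0_so u v)
  · rw [LinearMap.ker_eq_bot']
    intro v hv
    have h0 : φ0 m v = 0 := by
      funext p
      have := congrFun hv (e.symm p)
      simpa [rel, LinearMap.funLeft] using this
    have := φ0_ker hm
    rw [LinearMap.ker_eq_bot'] at this
    exact this v h0

def padMap (n r : ℕ) : (Fin n → ZMod 2) →ₗ[ZMod 2] (Fin (n + r) → ZMod 2) where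
  toFun x := Fin.append x 0
  map_add' a b := by
    funext j
    refine Fin.addCases (fun i => ?_) (fun i => ?_) j <;>
      simp [Fin.append_left, Fin.append_right]
  map_smul' c a := by
    funext j
    refine Fin.addCases (fun i => ?_) (fun i => ?_) j <;>
      simp [Fin.append_left, Fin.append_right]

lemma pad_props {n r t : ℕ} (h : ∃ ψ, CodeProps n t ψ) :
    ∃ ψ', CodeProps (n + r) t ψ' := by
  obtain ⟨ψ, hnorm, hso, hker⟩ := h
  refine ⟨(padMap n r).comp ψ, ?_, ?_, ?_⟩
  · intro v hv
    rw [LinearMap.comp_apply, ← hnorm v hv]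
    show hammingNorm (Fin.append (ψ v) 0) = _
    rw [hammingNorm_eq_sum, hammingNorm_eq_sum, Fin.sum_univ_add]
    simp [Fin.append_left, Fin.append_right]
  · intro u v
    rw [LinearMap.comp_apply, LinearMap.comp_apply]
    show (∑ j, Fin.append (ψ u) 0 j * Fin.append (ψ v) 0 j) = 0
    rw [Fin.sum_univ_add]
    simp only [Fin.append_left, Fin.append_right]
    simpa using hso u v
  · rw [LinearMap.ker_eq_bot']
    intro v hv
    rw [LinearMap.ker_eq_bot'] at hker
    apply hker
    funext i
    have h5 := congrFun hv (Fin.castAdd r i)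
    have h6 : (padMap n r) (ψ v) (Fin.castAdd r i) = ψ v i := Fin.append_left (ψ v) 0 i
    rw [LinearMap.comp_apply] at h5
    rw [← h6]
    simpa using h5

lemma code_of_props {n t : ℕ} (ht : t ≠ 0)
    {ψ : (Fin 6 → ZMod 2) →ₗ[ZMod 2] (Fin n → ZMod 2)} (h : CodeProps n t ψ) :
    IsSO (LinearMap.range ψ) ∧ Module.finrank (ZMod 2) (LinearMap.range ψ) = 6 ∧
      IsMinDist (LinearMap.range ψ) t := by
  obtain ⟨hnorm, hso, hker⟩ := h
  have hinj : Function.Injective ψ := LinearMap.ker_eq_bot.mp hker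
  refine ⟨?_, ?_, ?_, ?_⟩
  · rintro x ⟨u, rfl⟩ y ⟨v, rfl⟩
    exact hso u v
  · rw [LinearMap.finrank_range_of_inj hinj, Module.finrank_fintype_fun_eq_card,
      Fintype.card_fin]
  · refine ⟨ψ (fun _ => 1), LinearMap.mem_range_self _ _, ?_, ?_⟩
    · intro h0
      have h1 : (fun _ => (1 : ZMod 2)) = (0 : Fin 6 → ZMod 2) := by
        apply hinj; rw [h0, map_zero]
      have := congrFun h1 0
      simp at this
    · apply hnorm
      intro h1
      have := congrFun h1 0
      simp at this
  · rintro x ⟨v, rfl⟩ hx0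
    have hv : v ≠ 0 := by rintro rfl; rw [map_zero] at hx0; exact hx0 rfl
    exact le_of_eq (hnorm v hv).symm

lemma so_even {n : ℕ} {C : Submodule (ZMod 2) (Fin n → ZMod 2)} {d : ℕ}
    (hso : IsSO C) (hmd : IsMinDist C d) : 2 ∣ d := by
  obtain ⟨x, hxC, hx0, hw⟩ := hmd.1
  have h := hso x hxC x hxC
  have h2 : ∑ i, x i * x i = ∑ i, (if x i ≠ 0 then (1 : ZMod 2) else 0) := by
    apply Finset.sum_congr rfl
    intro i _
    exact (by decide : ∀ a : ZMod 2, a * a = if a ≠ 0 then 1 else 0) _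
  rw [h2, Finset.sum_boole] at h
  have h3 : (↑(hammingNorm x) : ZMod 2) = 0 := h
  rw [hw] at h3
  exact (ZMod.natCast_eq_zero_iff d 2).1 h3



lemma exists_so_code0 (m : ℕ) (hm : 1 ≤ m) :
    ∃ C : Submodule (ZMod 2) (Fin (63 * m) → ZMod 2),
      IsSO C ∧ Module.finrank (ZMod 2) C = 6 ∧ IsMinDist C (32 * m) := by
  obtain ⟨ψ, hψ⟩ := base_props m hm
  obtain ⟨h1, h2, h3⟩ := code_of_props (by omega : 32 * m ≠ 0) hψ
  exact ⟨LinearMap.range ψ, h1, h2, h3⟩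

lemma exists_so_code (m r : ℕ) (hm : 1 ≤ m) :
    ∃ C : Submodule (ZMod 2) (Fin (63 * m + r) → ZMod 2),
      IsSO C ∧ Module.finrank (ZMod 2) C = 6 ∧ IsMinDist C (32 * m) := by
  obtain ⟨ψ, hψ⟩ := pad_props (r := r) (base_props m hm)
  obtain ⟨h1, h2, h3⟩ := code_of_props (by omega : 32 * m ≠ 0) hψ
  exact ⟨LinearMap.range ψ, h1, h2, h3⟩

end Aux

-- arithmetic glue
lemma arith_bound {m d : ℕ} (h : ∑ i ∈ Finset.range 6, ((d-1)/2^i + 1) ≤ 63*m + 6) :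
    d ≤ 32*m + 1 := by
  simp only [Finset.sum_range_succ, Finset.sum_range_zero] at h
  norm_num at h
  omega

lemma lin_upper {m r d : ℕ} (hr : r ≤ 6)
    (hd : ∃ C : Submodule (ZMod 2) (Fin (63 * m + r) → ZMod 2),
      Module.finrank (ZMod 2) C = 6 ∧ IsMinDist C d) : d ≤ 32 * m + 1 := by
  obtain ⟨C, hrk, hmd⟩ := hd
  have hd1 : 1 ≤ d := by
    obtain ⟨x, hxC, hx0, hw⟩ := hmd.1
    have : hammingNorm x ≠ 0 := fun h => hx0 (hammingNorm_eq_zero.1 h)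
    omega
  have hg : GoodCode (Fin (63 * m + r)) 6 d := ⟨C, hrk, hmd.2⟩
  have := griesmer 6 (Fin (63 * m + r)) d hd1 hg
  rw [Fintype.card_fin] at this
  exact arith_bound (by omega)

/-- For `m ≥ 1` and `n = 63m + 6`, the Griesmer bound for binary `[n,6,d]` codes permits
at most `d = 32m + 1`; since the `m`-fold repeated simplex code is a self-orthogonal
`[63m, 6, 32m]` code and `d_so` is even and monotone in `n`, we get
`d_so(63m + r, 6) = 32m = 2⌊d(63m + r, 6)/2⌋` for all `0 ≤ r ≤ 6`. -/
theorem dso_63m_r (m : ℕ) (hm : 1 ≤ m) :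
    ((∑ i ∈ Finset.range 6, (32 * m + 1 + 2 ^ i - 1) / 2 ^ i ≤ 63 * m + 6) ∧
      (63 * m + 6 < ∑ i ∈ Finset.range 6, (32 * m + 2 + 2 ^ i - 1) / 2 ^ i)) ∧
    (∃ C : Submodule (ZMod 2) (Fin (63 * m) → ZMod 2),
      IsSO C ∧ Module.finrank (ZMod 2) C = 6 ∧ IsMinDist C (32 * m)) ∧
    ∀ r ≤ 6, dSO (63 * m + r) 6 = 32 * m ∧
      dSO (63 * m + r) 6 = 2 * (dLin (63 * m + r) 6 / 2) := by
  refine ⟨⟨?_, ?_⟩, exists_so_code0 m hm, ?_⟩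
  · simp only [Finset.sum_range_succ, Finset.sum_range_zero]
    norm_num
    omega
  · simp only [Finset.sum_range_succ, Finset.sum_range_zero]
    norm_num
    omega
  · intro r hr
    set SSO : Set ℕ := {d | ∃ C : Submodule (ZMod 2) (Fin (63 * m + r) → ZMod 2),
      IsSO C ∧ Module.finrank (ZMod 2) C = 6 ∧ IsMinDist C d} with hSSO
    set SL : Set ℕ := {d | ∃ C : Submodule (ZMod 2) (Fin (63 * m + r) → ZMod 2),
      Module.finrank (ZMod 2) C = 6 ∧ IsMinDist C d} with hSL
    have hmemSO : 32 * m ∈ SSO := exists_so_code m r hm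
    have hmemSL : 32 * m ∈ SL := by
      obtain ⟨C, _, h2, h3⟩ := exists_so_code m r hm
      exact ⟨C, h2, h3⟩
    have hubSO : ∀ d ∈ SSO, d ≤ 32 * m := by
      rintro d ⟨C, hso, hrk, hmd⟩
      have h1 : d ≤ 32 * m + 1 := lin_upper hr ⟨C, hrk, hmd⟩
      have h2 : 2 ∣ d := so_even hso hmd
      omega
    have hubSL : ∀ d ∈ SL, d ≤ 32 * m + 1 := fun d hd => lin_upper hr hd
    have hSOeq : dSO (63 * m + r) 6 = 32 * m := by
      rw [dSO]
      exact le_antisymm (csSup_le ⟨_, hmemSO⟩ hubSO)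
        (le_csSup ⟨32 * m, hubSO⟩ hmemSO)
    refine ⟨hSOeq, ?_⟩
    have h1 : 32 * m ≤ dLin (63 * m + r) 6 := le_csSup ⟨32 * m + 1, hubSL⟩ hmemSL
    have h2 : dLin (63 * m + r) 6 ≤ 32 * m + 1 := csSup_le ⟨_, hmemSL⟩ hubSL
    rw [hSOeq]
    omega
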